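/- Let T be a centroidal tree with n vertices and centroid vertex c, and let u and u' be (not necessarily distinct) neighbors of c. Then w(u) > n − w(u'). -/

import Mathlib

/-- The number of edges of the branch of the tree `G` at vertex `v` containing the
neighbour `u` of `v`: this equals the number of vertices strictly closer to `u`
than to `v`. -/
noncomputable def branchWeight {V : Type*} (G : SimpleGraph V) (v u : V) : ℕ :=
  {x : V | G.dist x u < G.dist x v}.ncard

open Classical in
/-- The weight of a vertex `v`: the maximum number of edges in a branch at `v`. -/
noncomputable def weight {V : Type*} (G : SimpleGraph V) [Fintype V] (v : V) : ℕ :=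
  (G.neighborFinset v).sup (branchWeight G v)

/-- The centroid: the set of vertices of minimal weight. -/
noncomputable def centroid {V : Type*} (G : SimpleGraph V) [Fintype V] : Set V :=
  {v | ∀ u, weight G v ≤ weight G u}

/-- In a tree, a vertex is never equidistant from the two endpoints of an edge. -/
lemma tree_dist_ne {V : Type*} {G : SimpleGraph V} (hG : G.IsTree) {a b : V}
    (hab : G.Adj a b) (x : V) : G.dist x a ≠ G.dist x b := by
  intro hEq
  classical
  have hconn : G.Connected := hG.isConnected
  set d := G.dist x a with hd
  obtain ⟨P, hP, hPl⟩ := hconn.exists_path_of_dist x a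
  obtain ⟨Q, hQ, hQl⟩ := hconn.exists_path_of_dist x b
  have hbP : b ∉ P.support := by
    intro hb
    have hsplit := congr_arg SimpleGraph.Walk.length (P.take_spec hb)
    rw [SimpleGraph.Walk.length_append] at hsplit
    have h1 : d ≤ (P.takeUntil b hb).length := by
      rw [hEq]; exact SimpleGraph.dist_le _
    have h2 : 1 ≤ (P.dropUntil b hb).length := by
      have : G.dist b a ≤ (P.dropUntil b hb).length := SimpleGraph.dist_le _
      have hba : G.dist b a = 1 := SimpleGraph.dist_eq_one_iff_adj.mpr hab.symm
      omega
    omega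
  -- extend P by the edge a-b to get a path from x to b of length d+1
  set P' : G.Walk x b := (SimpleGraph.Walk.cons hab.symm P.reverse).reverse with hP'
  have hP'path : P'.IsPath := by
    rw [hP', SimpleGraph.Walk.isPath_reverse_iff]
    apply SimpleGraph.Walk.IsPath.cons
    · rwa [SimpleGraph.Walk.isPath_reverse_iff]
    · rwa [SimpleGraph.Walk.support_reverse, List.mem_reverse]
  have hP'l : P'.length = d + 1 := by
    simp [hP', hPl, hd]
  have := hG.IsAcyclic.path_unique ⟨P', hP'path⟩ ⟨Q, hQ⟩
  have : P'.length = Q.length := by rw [congr_arg (·.1.length) this]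
  omega

/-- In a centroidal tree with `n` vertices and centroid vertex `c`, for any
(not necessarily distinct) neighbours `u`, `u'` of `c` we have `w(u) > n - w(u')`. -/
theorem stmt_19 {V : Type*} [Fintype V] (G : SimpleGraph V) (hG : G.IsTree)
    (c : V) (hc : centroid G = {c}) (u u' : V) (hu : G.Adj c u) (hu' : G.Adj c u') :
    (Fintype.card V : ℤ) - weight G u' < weight G u := by
  classical
  set n := Fintype.card V
  -- the two "sides" of the edge c-u partition V
  have hcompl : {x : V | G.dist x c < G.dist x u} = {x : V | G.dist x u < G.dist x c}ᶜ := by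
    ext x
    have hne := tree_dist_ne hG hu x
    simp only [Set.mem_setOf_eq, Set.mem_compl_iff, not_lt]
    constructor
    · exact le_of_lt
    · intro h; exact lt_of_le_of_ne h (hne)
  have hsum : branchWeight G c u + branchWeight G u c = n := by
    unfold branchWeight
    rw [hcompl]
    rw [Set.ncard_add_ncard_compl _ (Set.toFinite _) (Set.toFinite _)]
    exact (Nat.card_eq_fintype_card)
  -- branchWeight G c u ≤ weight G c
  have h1 : branchWeight G c u ≤ weight G c :=
    Finset.le_sup (by rwa [SimpleGraph.mem_neighborFinset])
  -- branchWeight G u c ≤ weight G u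
  have h2 : branchWeight G u c ≤ weight G u :=
    Finset.le_sup (by rw [SimpleGraph.mem_neighborFinset]; exact hu.symm)
  -- weight G c < weight G u'
  have h3 : weight G c < weight G u' := by
    have hcmem : c ∈ centroid G := by rw [hc]; rfl
    have hu'mem : u' ∉ centroid G := by
      rw [hc]; simpa using hu'.ne'
    have := hcmem u'
    rcases lt_or_eq_of_le this with h | h
    · exact h
    · exfalso
      apply hu'mem
      intro v
      rw [← h]
      exact hcmem v
  have hn : branchWeight G c u + branchWeight G u c = n := hsum
  -- conclude
  have := h2
  -- cast arithmetic
  omega
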